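/- arXiv:2007.00911 — 5 statements merged into one kernel-verified Lean document; each statement's English description precedes it below -/
import Mathlib

section
/- Let $m \geq 5$ be an integer and $K$ an algebraically closed field whose characteristic does not divide $m(m-1)$. Let $a, b \in K$ with $b \neq 0$ and $b \neq a^m$. Then there exists $t \in K$ such that the polynomial $x^m - tx + ta - b$ has exactly $m-1$ distinct roots in $K$ (i.e., exactly one root of multiplicity two and all other roots simple). -/
open Polynomial
open scoped Classical

/-- For `m ≥ 5`, `K` algebraically closed with characteristic not dividing
`m(m-1)`, and `a b : K` with `b ≠ 0`, `b ≠ a^m`, there exists `t : K` such that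
`x^m - t x + t a - b` has exactly `m - 1` distinct roots in `K`. -/
theorem stmt0 (K : Type*) [Field K] [IsAlgClosed K] (m : ℕ) (hm : 5 ≤ m)
    (hchar : ((m * (m - 1) : ℕ) : K) ≠ 0) (a b : K) (hb : b ≠ 0) (hb' : b ≠ a ^ m) :
    ∃ t : K, ((X ^ m - C t * X + C (t * a - b) : K[X]).roots.toFinset.card = m - 1) := by
  obtain ⟨k, rfl⟩ : ∃ k, m = k + 2 := ⟨m - 2, by omega⟩
  have hm1 : (k + 2) * (k + 2 - 1) = (k + 2) * (k + 1) := rfl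
  rw [hm1, Nat.cast_mul] at hchar
  have hM : ((k + 2 : ℕ) : K) ≠ 0 := fun h => hchar (by rw [h, zero_mul])
  have hM1 : ((k + 1 : ℕ) : K) ≠ 0 := fun h => hchar (by rw [h, mul_zero])
  have hlead : (1 - ((k + 2 : ℕ) : K)) ≠ 0 := by
    intro h
    apply hM1
    push_cast at h ⊢
    linear_combination -h
  -- find x₀, a nonzero root of (1-m) x^m + m a x^(m-1) - b
  set g : K[X] := C (1 - ((k+2:ℕ):K)) * X ^ (k+2) + C (((k+2:ℕ):K) * a) * X ^ (k+1) - C b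
    with hg
  have hgnat : g.natDegree = k + 2 := by
    rw [hg]; compute_degree!
    have h : (Int.subNatNat 1 (k + 2) : ℤ) = -((k + 1 : ℕ) : ℤ) := by
      rw [Int.subNatNat_eq_coe]; push_cast; ring
    rw [h]
    intro hz
    apply hM1
    push_cast at hz ⊢
    linear_combination -hz
  have hgne : g.degree ≠ 0 := by
    have : 0 < g.degree := natDegree_pos_iff_degree_pos.mp (by omega)
    exact this.ne'
  obtain ⟨x₀, hx₀⟩ := IsAlgClosed.exists_root g hgne
  rw [hg] at hx₀
  simp only [IsRoot, eval_sub, eval_add, eval_mul, eval_C, eval_pow, eval_X] at hx₀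
  have hx0ne : x₀ ≠ 0 := by
    rintro rfl
    simp [zero_pow] at hx₀
    exact hb hx₀
  refine ⟨((k+2:ℕ):K) * x₀ ^ (k+1), ?_⟩
  set t : K := ((k+2:ℕ):K) * x₀ ^ (k+1) with ht
  set f : K[X] := X ^ (k+2) - C t * X + C (t * a - b) with hf
  have hfnat : f.natDegree = k + 2 := by
    rw [hf]; compute_degree!
    rw [if_neg (by omega : ¬ k + 2 = 1)]; simp
  have hfne : f ≠ 0 := fun h => by rw [h, natDegree_zero] at hfnat; omega
  -- x₀ is a root of f
  have hfx₀ : f.eval x₀ = 0 := by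
    simp only [hf, eval_add, eval_sub, eval_mul, eval_pow, eval_X, eval_C, ht]
    linear_combination hx₀
  -- derivatives
  have hder : derivative f = C ((k+2:ℕ):K) * X ^ (k+1) - C t := by
    rw [hf]; simp [derivative_X_pow]
    rw [map_ofNat C 2]; ring
  have hder2 : derivative (derivative f) = C (((k+2:ℕ):K) * ((k+1:ℕ):K)) * X ^ k := by
    rw [hder]; simp [derivative_X_pow, mul_assoc]
  have hdx₀ : (derivative f).eval x₀ = 0 := by
    simp [hder, ht]
  -- the multiplicity of x₀ is exactly 2
  have hmul2 : f.rootMultiplicity x₀ = 2 := by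
    have h1 : 1 < f.rootMultiplicity x₀ :=
      (one_lt_rootMultiplicity_iff_isRoot hfne).2 ⟨hfx₀, hdx₀⟩
    have hderne : derivative f ≠ 0 := by
      intro h
      apply hM
      have := congrArg (fun p => Polynomial.coeff p (k+1)) h
      simp only [hder] at this
      simp only [hder, coeff_sub, coeff_C_mul, coeff_X_pow, coeff_C, coeff_zero] at this
      norm_num at this
      push_cast at this ⊢
      linear_combination this
    have h2 : f.rootMultiplicity x₀ - 1 ≤ (derivative f).rootMultiplicity x₀ :=
      rootMultiplicity_sub_one_le_derivative_rootMultiplicity_of_ne_zero f x₀ hderne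
    have h3 : ¬ 1 < (derivative f).rootMultiplicity x₀ := by
      intro h
      have hdd := ((one_lt_rootMultiplicity_iff_isRoot hderne).1 h).2
      rw [hder2] at hdd
      simp only [IsRoot, eval_mul, eval_C, eval_pow, eval_X] at hdd
      rcases mul_eq_zero.1 hdd with h' | h'
      · exact (mul_ne_zero hM hM1) h'
      · exact hx0ne (pow_eq_zero_iff (by omega : k ≠ 0) |>.1 h')
    omega
  -- all other roots are simple
  have hsimple : ∀ z ∈ f.roots.toFinset, z ≠ x₀ → f.rootMultiplicity z = 1 := by
    intro z hz hzne
    have hzroot : f.IsRoot z := by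
      rw [Multiset.mem_toFinset, mem_roots hfne] at hz
      exact hz
    have h1 : 1 ≤ f.rootMultiplicity z := (rootMultiplicity_pos hfne).2 hzroot
    have h2 : ¬ 1 < f.rootMultiplicity z := by
      intro h
      have hd := ((one_lt_rootMultiplicity_iff_isRoot hfne).1 h).2
      rw [hder] at hd
      simp only [IsRoot, eval_sub, eval_mul, eval_C, eval_pow, eval_X, ht] at hd
      have hzp : z ^ (k+1) = x₀ ^ (k+1) := mul_left_cancel₀ hM (sub_eq_zero.1 hd)
      have hz0 : f.eval z = 0 := hzroot
      simp only [hf, eval_add, eval_sub, eval_mul, eval_pow, eval_X, eval_C, ht] at hz0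
      have hfx₀' : x₀ ^ (k+2) - ((k+2:ℕ):K) * x₀ ^ (k+1) * x₀
          + (((k+2:ℕ):K) * x₀ ^ (k+1) * a - b) = 0 := by
        have := hfx₀
        simp only [hf, eval_add, eval_sub, eval_mul, eval_pow, eval_X, eval_C, ht] at this
        exact this
      have key : (1 - ((k+2:ℕ):K)) * x₀ ^ (k+1) * (z - x₀) = 0 := by
        linear_combination hz0 - hfx₀' - z * hzp
      rcases mul_eq_zero.1 key with h' | h'
      · rcases mul_eq_zero.1 h' with h'' | h''
        · exact hlead h''
        · exact hx0ne (pow_eq_zero_iff (by omega : k + 1 ≠ 0) |>.1 h'')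
      · exact hzne (sub_eq_zero.1 h')
    omega
  -- counting roots
  have hsplits : f.Splits := IsAlgClosed.splits f
  have hcard : f.roots.card = k + 2 := by
    rw [← hfnat]; exact (splits_iff_card_roots.1 hsplits)
  have hx₀mem : x₀ ∈ f.roots.toFinset := by
    rw [Multiset.mem_toFinset, mem_roots hfne]; exact hfx₀
  have hcount : ∀ z, f.roots.count z = f.rootMultiplicity z := fun z => count_roots f
  have hsum : ∑ z ∈ f.roots.toFinset, f.roots.count z = f.roots.card :=
    Multiset.toFinset_sum_count_eq _
  rw [hcard, ← Finset.add_sum_erase _ _ hx₀mem, hcount, hmul2] at hsum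
  have hones : ∀ z ∈ (f.roots.toFinset).erase x₀, f.roots.count z = 1 := fun z hz => by
    rw [hcount]
    exact hsimple z (Finset.mem_of_mem_erase hz) (Finset.ne_of_mem_erase hz)
  rw [Finset.sum_congr rfl hones, Finset.sum_const, smul_eq_mul, mul_one,
    Finset.card_erase_of_mem hx₀mem] at hsum
  have hpos : 1 ≤ (f.roots.toFinset).card := Finset.card_pos.2 ⟨x₀, hx₀mem⟩
  omega
end

section
/- Let $K$ be a field whose characteristic does not divide $m-1$, where $m \geq 2$. For any $t \in K$ with $t \neq 0$, every root of the polynomial $x^m - tx + ta - b$ in an algebraic closure of $K$ has multiplicity at most $2$. -/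
open Polynomial

/-- If the characteristic of `K` does not divide `m - 1` (`m ≥ 2`) and
`t ≠ 0`, then every root of `x^m - t x + t a - b` in an algebraic closure of `K`
has multiplicity at most `2`. -/
theorem stmt1 (K : Type*) [Field K] (m : ℕ) (hm : 2 ≤ m)
    (hchar : (((m - 1 : ℕ)) : K) ≠ 0) (a b t : K) (ht : t ≠ 0) :
    ∀ x : AlgebraicClosure K,
      ((X ^ m - C t * X + C (t * a - b) : K[X]).map
          (algebraMap K (AlgebraicClosure K))).rootMultiplicity x ≤ 2 := by
  intro x
  by_contra hcon
  push_neg at hcon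
  have ht' : algebraMap K (AlgebraicClosure K) t ≠ 0 := fun h =>
    ht ((_root_.map_eq_zero (algebraMap K (AlgebraicClosure K))).mp h)
  have hm1 : ((m - 1 : ℕ) : AlgebraicClosure K) ≠ 0 := by
    intro h
    exact hchar ((_root_.map_eq_zero (algebraMap K (AlgebraicClosure K))).mp
      (by rw [map_natCast]; exact h))
  have hF : ((X ^ m - C t * X + C (t * a - b) : K[X]).map
        (algebraMap K (AlgebraicClosure K)))
      = X ^ m - C (algebraMap K (AlgebraicClosure K) t) * X
          + C (algebraMap K (AlgebraicClosure K) (t * a - b)) := by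
    simp [Polynomial.map_add, Polynomial.map_sub, Polynomial.map_mul,
      Polynomial.map_pow]
  rw [hF] at hcon
  set F : (AlgebraicClosure K)[X] :=
    X ^ m - C (algebraMap K (AlgebraicClosure K) t) * X
      + C (algebraMap K (AlgebraicClosure K) (t * a - b)) with hFdef
  have h1 : (derivative^[1] F).IsRoot x :=
    Polynomial.isRoot_iterate_derivative_of_lt_rootMultiplicity (by omega)
  have h2 : (derivative^[2] F).IsRoot x :=
    Polynomial.isRoot_iterate_derivative_of_lt_rootMultiplicity (by omega)
  have hd1 : derivative F = C ((m : AlgebraicClosure K)) * X ^ (m - 1)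
      - C (algebraMap K (AlgebraicClosure K) t) := by
    simp [hFdef, derivative_X_pow]
  have hd2 : derivative (derivative F)
      = C ((m : AlgebraicClosure K))
        * (C (((m - 1 : ℕ) : AlgebraicClosure K)) * X ^ (m - 2)) := by
    rw [hd1, derivative_sub, derivative_C, sub_zero, derivative_C_mul,
      derivative_X_pow, show m - 1 - 1 = m - 2 from by omega]
  simp only [Function.iterate_one, Function.iterate_succ, Function.iterate_zero,
    Function.comp_apply, id_eq] at h1 h2
  rw [hd1] at h1
  rw [hd2] at h2
  simp only [IsRoot, eval_sub, eval_mul, eval_C, eval_pow, eval_X] at h1 h2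
  by_cases hm0 : (m : AlgebraicClosure K) = 0
  · rw [hm0, zero_mul, zero_sub, neg_eq_zero] at h1
    exact ht' h1
  · have hx : x ^ (m - 2) = 0 := by
      rcases mul_eq_zero.mp h2 with h | h
      · exact absurd h hm0
      · rcases mul_eq_zero.mp h with h | h
        · exact absurd h hm1
        · exact h
    have hx1 : x ^ (m - 1) = 0 := by
      rw [show m - 1 = (m - 2) + 1 from by omega, pow_succ, hx, zero_mul]
    rw [hx1, mul_zero, zero_sub, neg_eq_zero] at h1
    exact ht' h1
end

section
/- Let $K$ be an algebraically closed field with $\mathrm{char}(K) \nmid m(m-1)$, $m \geq 2$, and $a, b \in K$. If $\bar{t} \in K \setminus \{0, m\}$, then the polynomial $x^m - \bar{t}x + \bar{t}a - b$ has at most one root of multiplicity two. -/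
open Polynomial

/-- Over an algebraically closed field `K` with `m` and `m-1` nonzero
in `K`, for `t̄ ∉ {0, m}` the polynomial `x^m - t̄ x + t̄ a - b` has at most one
root of multiplicity two. -/
theorem stmt2 (K : Type*) [Field K] [IsAlgClosed K] (m : ℕ) (hm : 2 ≤ m)
    (hcharm : ((m : ℕ) : K) ≠ 0) (hcharm1 : (((m - 1 : ℕ)) : K) ≠ 0)
    (a b : K) (t : K) (ht0 : t ≠ 0) (htm : t ≠ (m : K)) :
    ∀ x y : K,
      (X ^ m - C t * X + C (t * a - b) : K[X]).rootMultiplicity x = 2 →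
      (X ^ m - C t * X + C (t * a - b) : K[X]).rootMultiplicity y = 2 →
      x = y := by
  have hm1 : m - 1 + 1 = m := by omega
  have key : ∀ z : K,
      (X ^ m - C t * X + C (t * a - b) : K[X]).rootMultiplicity z = 2 →
      z = (t * a - b) * m / (t * ((m : K) - 1)) := by
    intro z hz
    have h0 : (X ^ m - C t * X + C (t * a - b) : K[X]).IsRoot z := by
      have := isRoot_iterate_derivative_of_lt_rootMultiplicity
        (p := (X ^ m - C t * X + C (t * a - b) : K[X])) (t := z) (n := 0)
        (by rw [hz]; norm_num)
      simpa using this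
    have h1 : ((X ^ m - C t * X + C (t * a - b) : K[X]).derivative).IsRoot z := by
      have := isRoot_iterate_derivative_of_lt_rootMultiplicity
        (p := (X ^ m - C t * X + C (t * a - b) : K[X])) (t := z) (n := 1)
        (by rw [hz]; norm_num)
      simpa using this
    have e0 : z ^ m - t * z + (t * a - b) = 0 := by simpa using h0
    have e1 : (m : K) * z ^ (m - 1) - t = 0 := by
      simp [IsRoot] at h1
      simpa [derivative_X_pow] using h1
    have hzm : z ^ m = z * z ^ (m - 1) := by
      conv_lhs => rw [← hm1]
      ring
    have hm1K : ((m : K) - 1) ≠ 0 := by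
      have : (((m - 1 : ℕ)) : K) = (m : K) - 1 := by
        push_cast [Nat.cast_sub (by omega : 1 ≤ m)]; ring
      rwa [this] at hcharm1
    field_simp
    rw [hzm] at e0
    have hzm1 : z ^ (m-1) = t / m := by field_simp; linear_combination e1
    rw [hzm1] at e0
    field_simp at e0
    linear_combination -e0
  intro x y hx hy
  rw [key x hx, key y hy]
end

section
/- Let $G$ be a subgroup of the symmetric group on a finite set $\Omega$ with $|\Omega| = m$, and suppose $G$ contains a permutation $\sigma$ whose support is an orbit $\mathcal{O}$ of size $r$ on which $\sigma$ acts as a single cycle of length $r$, where $r$ is prime and $r > m/2$. Then $G$ acting on $\Omega$ is primitive, provided $G$ is transitive. -/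
open MulAction Set Pointwise

/-- A transitive subgroup `G` of the symmetric group on a finite set `Ω`
of size `m` containing an `r`-cycle, for a prime `r` with `m/2 < r ≤ m`, is primitive
(i.e. every block of the action of `G` on `Ω` is trivial). -/
theorem stmt8 (Ω : Type*) [Fintype Ω] [DecidableEq Ω] (m : ℕ) (hΩ : Fintype.card Ω = m)
    (G : Subgroup (Equiv.Perm Ω)) (r : ℕ) (hr : r.Prime) (hrm : m < 2 * r) (hrm' : r ≤ m)
    (σ : Equiv.Perm Ω) (hσG : σ ∈ G) (hσ : σ.IsCycle) (hsupp : σ.support.card = r)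
    (htrans : MulAction.IsPretransitive G Ω) :
    ∀ B : Set Ω, MulAction.IsBlock G B → B.Subsingleton ∨ B = Set.univ := by
  haveI := htrans
  intro B hB
  by_cases hBs : B.Subsingleton
  · exact Or.inl hBs
  right
  rw [Set.not_subsingleton_iff] at hBs
  obtain ⟨a, ha, b, hb, hab⟩ := hBs
  -- pick a point in the support of σ
  have hr2 : 2 ≤ r := hr.two_le
  have hsupp_ne : σ.support.Nonempty := by
    rw [← Finset.card_pos, hsupp]; omega
  obtain ⟨x, hx⟩ := hsupp_ne
  rw [Equiv.Perm.mem_support] at hx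
  obtain ⟨g, hg⟩ := htrans.exists_smul_eq a x
  set C : Set Ω := g • B with hCdef
  have hC : IsBlock G C := hB.translate g
  have hxC : x ∈ C := hg ▸ Set.smul_mem_smul_set ha
  have hCcard : C.ncard = B.ncard := Set.ncard_smul_set g B
  have hC2 : 2 ≤ C.ncard := by
    rw [hCcard]
    have : 1 < B.ncard := (Set.one_lt_ncard (Set.toFinite B)).mpr ⟨a, ha, b, hb, hab⟩
    omega
  set g₀ : G := ⟨σ, hσG⟩ with hg₀def
  have hord : orderOf g₀ = r := by
    rw [Subgroup.orderOf_mk, hσ.orderOf, hsupp]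
  -- auxiliary: iterates of invariance
  have hiter : ∀ (h : G), h • C = C → ∀ n : ℕ, (h ^ n) • C = C := by
    intro h hh n
    induction n with
    | zero => simp
    | succ n ih => rw [pow_succ, mul_smul, hh, ih]
  -- key : σ stabilizes C
  have key : g₀ • C = C := by
    by_contra hne
    have hne' : ∀ j : ℕ, 0 < j → j < r → ¬((g₀ ^ j) • C = C) := by
      intro j hj1 hj2 h
      have hco : j.Coprime (orderOf g₀) := by
        rw [hord]
        exact (hr.coprime_iff_not_dvd.mpr (Nat.not_dvd_of_pos_of_lt hj1 hj2)).symm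
      obtain ⟨u, hu⟩ := exists_pow_eq_self_of_coprime hco
      exact hne (by rw [← hu]; exact hiter _ h u)
    have hdisj : ∀ i j : ℕ, i < j → j < r → Disjoint ((g₀ ^ i) • C) ((g₀ ^ j) • C) := by
      intro i j hij hjr
      apply hC
      intro h
      have h2 : (g₀ ^ (j - i)) • C = C := by
        have : (g₀ ^ i) • (g₀ ^ (j - i)) • C = (g₀ ^ i) • C := by
          rw [smul_smul, ← pow_add]
          rw [Nat.add_sub_cancel' (le_of_lt hij)]
          exact h.symm
        exact smul_left_cancel _ this
      exact hne' (j - i) (by omega) (by omega) h2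
    -- counting
    classical
    set t : Finset Ω := C.toFinite.toFinset with htdef
    have htcard : t.card = C.ncard := (Set.ncard_eq_toFinset_card C C.toFinite).symm
    set F : ℕ → Finset Ω := fun i => t.image (⇑(σ ^ i)) with hFdef
    have hFset : ∀ i : ℕ, (F i : Set Ω) = (g₀ ^ i) • C := by
      intro i
      ext y
      simp only [hFdef, Finset.coe_image, Set.Finite.coe_toFinset, htdef]
      constructor
      · rintro ⟨z, hz, rfl⟩
        exact ⟨z, hz, rfl⟩
      · rintro ⟨z, hz, rfl⟩
        exact ⟨z, hz, rfl⟩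
    have hFcard : ∀ i, (F i).card = C.ncard := by
      intro i
      rw [hFdef]
      simp only
      rw [Finset.card_image_of_injective _ (Equiv.injective _), htcard]
    have hFdisj : ∀ i ∈ Finset.range r, ∀ j ∈ Finset.range r, i ≠ j →
        Disjoint (F i) (F j) := by
      intro i hi j hj hij
      rw [← Finset.disjoint_coe, hFset, hFset]
      rcases lt_or_gt_of_ne hij with h | h
      · exact hdisj i j h (Finset.mem_range.mp hj)
      · exact (hdisj j i h (Finset.mem_range.mp hi)).symm
    have hcard : ((Finset.range r).biUnion F).card = r * C.ncard := by
      rw [Finset.card_biUnion hFdisj]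
      simp [hFcard, Finset.sum_const, Finset.card_range]
    have hle : ((Finset.range r).biUnion F).card ≤ m := by
      rw [← hΩ]; exact Finset.card_le_univ _
    have : r * 2 ≤ r * C.ncard := Nat.mul_le_mul_left r hC2
    omega
  -- support of σ is contained in C
  have hsub : (σ.support : Set Ω) ⊆ C := by
    intro y hy
    rw [Finset.mem_coe, Equiv.Perm.mem_support] at hy
    obtain ⟨i, hi⟩ := hσ.exists_pow_eq hx hy
    have : (g₀ ^ i) • C = C := hiter g₀ key i
    rw [← hi, ← this]
    exact ⟨x, hxC, rfl⟩
  have hrle : r ≤ C.ncard := by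
    have := Set.ncard_le_ncard hsub C.toFinite
    rwa [Set.ncard_coe_finset, hsupp] at this
  -- conclude
  apply hB.eq_univ_of_card_lt
  rw [Nat.card_eq_fintype_card, hΩ]
  omega
end

section
/- Let $C$ be a smooth projective curve of genus $g$ over $\mathbb{F}_q$ and let $N_m$ denote the number of $\mathbb{F}_{q^m}$-rational points. Then there exists a strictly increasing sequence $(m_k)$ of positive integers such that $(N_{m_k} - (q^{m_k}+1))/q^{m_k/2} \to -2g$ as $k \to \infty$. -/
open Filter


lemma key_recur {g : ℕ} (z : Fin g → ℂ) (hz : ∀ j, ‖z j‖ = 1) :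
    ∀ ε > (0:ℝ), ∀ M : ℕ, ∃ m : ℕ, M < m ∧ ∀ j, ‖z j ^ m - 1‖ < ε := by
  intro ε hε M
  set f : ℕ → (Fin g → ℂ) := fun m j => z j ^ m with hf
  have hmem : ∀ m, f m ∈ Metric.closedBall (0 : Fin g → ℂ) 1 := by
    intro m
    rw [Metric.mem_closedBall, dist_zero_right]
    refine pi_norm_le_iff_of_nonneg zero_le_one |>.2 (fun j => ?_)
    rw [norm_pow, hz j, one_pow]
  obtain ⟨x, -, φ, hφ, hconv⟩ :=
    (isCompact_closedBall (0 : Fin g → ℂ) 1).tendsto_subseq hmem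
  have hcauchy := hconv.cauchySeq
  rw [Metric.cauchySeq_iff] at hcauchy
  obtain ⟨K, hK⟩ := hcauchy ε hε
  have hle : φ K + M + 1 ≤ φ (φ K + M + 1 + K) := le_trans (by omega) hφ.le_apply
  refine ⟨φ (φ K + M + 1 + K) - φ K, by omega, fun j => ?_⟩
  have hdist := hK (φ K + M + 1 + K) (by omega) K le_rfl
  have hcomp : dist ((f ∘ φ) (φ K + M + 1 + K) j) ((f ∘ φ) K j)
      ≤ dist ((f ∘ φ) (φ K + M + 1 + K)) ((f ∘ φ) K) := dist_le_pi_dist _ _ j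
  have heq : z j ^ (φ (φ K + M + 1 + K)) - z j ^ (φ K)
      = z j ^ (φ K) * (z j ^ (φ (φ K + M + 1 + K) - φ K) - 1) := by
    have hpow : φ K + (φ (φ K + M + 1 + K) - φ K) = φ (φ K + M + 1 + K) := by omega
    rw [mul_sub, mul_one, ← pow_add, hpow]
  have habs2 : ‖z j ^ (φ (φ K + M + 1 + K) - φ K) - 1‖
      = ‖z j ^ (φ (φ K + M + 1 + K)) - z j ^ (φ K)‖ := by
    rw [heq, norm_mul, norm_pow, hz j, one_pow, one_mul]
  rw [habs2]
  calc ‖z j ^ (φ (φ K + M + 1 + K)) - z j ^ (φ K)‖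
      = dist ((f ∘ φ) (φ K + M + 1 + K) j) ((f ∘ φ) K j) := by
        simp [f, Complex.dist_eq]
    _ ≤ dist ((f ∘ φ) (φ K + M + 1 + K)) ((f ∘ φ) K) := hcomp
    _ < ε := hdist

lemma build_seq {P : ℝ → ℕ → Prop}
    (h : ∀ ε > (0:ℝ), ∀ M : ℕ, ∃ m, M < m ∧ P ε m) :
    ∃ m : ℕ → ℕ, StrictMono m ∧ ∀ k, 0 < m k ∧ P (1/(k+1)) (m k) := by
  choose f hf1 hf2 using fun (k M : ℕ) =>
    h (1/(k+1)) (by positivity) M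
  refine ⟨fun k => Nat.rec (f 0 0) (fun k ih => f (k+1) ih) k, ?_, ?_⟩
  · apply strictMono_nat_of_lt_succ
    intro k
    exact hf1 (k+1) _
  · intro k
    induction k with
    | zero => exact ⟨hf1 0 0, hf2 0 0⟩
    | succ k ih => exact ⟨lt_trans ih.1 (hf1 (k+1) _), hf2 (k+1) _⟩

/-- For a genus-`g` curve over `𝔽_q` with Weil numbers `α_j` of modulus `√q`
(closed under conjugation, so `N m = q^m + 1 - ∑_j (α_j^m + conj(α_j)^m)`), there is a
strictly increasing sequence `m_k` of positive integers with
`(N_{m_k} - (q^{m_k}+1))/q^{m_k/2} → -2g`. -/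
theorem stmt17 (q : ℕ) (hq : 2 ≤ q) (g : ℕ) (α : Fin g → ℂ)
    (habs : ∀ j, ‖α j‖ = Real.sqrt q) (N : ℕ → ℤ)
    (hN : ∀ m : ℕ, 1 ≤ m → (N m : ℂ) = (q : ℂ) ^ m + 1 -
      ∑ j : Fin g, ((α j) ^ m + (starRingEnd ℂ) (α j) ^ m)) :
    ∃ m : ℕ → ℕ, StrictMono m ∧ (∀ k, 0 < m k) ∧
      Tendsto (fun k => ((N (m k) : ℝ) - ((q : ℝ) ^ (m k) + 1)) / (Real.sqrt q) ^ (m k))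
        atTop (nhds (-2 * (g : ℝ))) := by
  have hq0 : (0:ℝ) < q := by positivity
  have hs : (0:ℝ) < Real.sqrt q := Real.sqrt_pos.2 hq0
  set z : Fin g → ℂ := fun j => α j / (Real.sqrt q : ℂ) with hz_def
  have hz : ∀ j, ‖z j‖ = 1 := by
    intro j
    simp only [hz_def, norm_div, habs j, Complex.norm_real, Real.norm_eq_abs,
      abs_of_pos hs, div_self hs.ne']
  obtain ⟨m, hmono, hm⟩ := build_seq (key_recur z hz)
  refine ⟨m, hmono, fun k => (hm k).1, ?_⟩
  have hreal : ∀ k, ((N (m k) : ℝ) - ((q : ℝ) ^ (m k) + 1)) / (Real.sqrt q) ^ (m k)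
      = - ∑ j : Fin g, 2 * (z j ^ (m k)).re := by
    intro k
    have h1 := hN (m k) (hm k).1
    have h2 : (N (m k) : ℝ) = (q : ℝ) ^ (m k) + 1 - ∑ j : Fin g, 2 * (α j ^ (m k)).re := by
      have hc : ((N (m k) : ℝ) : ℂ)
          = (((q : ℝ) ^ (m k) + 1 - ∑ j : Fin g, 2 * (α j ^ (m k)).re : ℝ) : ℂ) := by
        push_cast
        rw [h1]
        congr 1
        apply Finset.sum_congr rfl
        intro j _
        rw [← map_pow, Complex.add_conj]
        push_cast
        ring
      exact_mod_cast hc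
    have hre : ∀ j, 2 * (z j ^ (m k)).re
        = (2 * (α j ^ (m k)).re) / (Real.sqrt q) ^ (m k) := by
      intro j
      rw [hz_def]
      simp only [div_pow, ← Complex.ofReal_pow, Complex.div_ofReal_re]
      ring
    rw [h2]
    simp only [hre, ← Finset.sum_div]
    have hx : (Real.sqrt q) ^ (m k) ≠ 0 := by positivity
    field_simp
    ring
  have hbound : ∀ k : ℕ, |((N (m k) : ℝ) - ((q : ℝ) ^ (m k) + 1)) / (Real.sqrt q) ^ (m k)
      - (-2 * (g:ℝ))| ≤ 2 * g / (k+1) := by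
    intro k
    rw [hreal k]
    have hsum : - ∑ j : Fin g, 2 * (z j ^ (m k)).re - (-2 * (g:ℝ))
        = ∑ j : Fin g, 2 * (1 - (z j ^ (m k)).re) := by
      rw [Finset.sum_congr rfl (fun j _ => by ring :
        ∀ j ∈ Finset.univ, 2 * (1 - (z j ^ (m k)).re) = 2 - 2 * (z j ^ (m k)).re),
        Finset.sum_sub_distrib, Finset.sum_const, Finset.card_fin]
      ring
    rw [hsum]
    calc |∑ j : Fin g, 2 * (1 - (z j ^ (m k)).re)|
        ≤ ∑ j : Fin g, |2 * (1 - (z j ^ (m k)).re)| := Finset.abs_sum_le_sum_abs _ _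
      _ ≤ ∑ j : Fin g, (2:ℝ) * (1/((k:ℝ)+1)) := by
          apply Finset.sum_le_sum
          intro j _
          rw [abs_mul, abs_two]
          have h1 : |1 - (z j ^ (m k)).re| ≤ ‖z j ^ (m k) - 1‖ := by
            have : |1 - (z j ^ (m k)).re| = |(z j ^ (m k) - 1).re| := by
              rw [Complex.sub_re, Complex.one_re, abs_sub_comm]
            rw [this]
            exact Complex.abs_re_le_norm _
          have h2 := (hm k).2 j
          nlinarith [h1, h2]
      _ = 2 * g / (k+1) := by
          rw [Finset.sum_const, Finset.card_fin, nsmul_eq_mul]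
          ring
  have h0 : Tendsto (fun k : ℕ => 2 * (g:ℝ) / (k+1)) atTop (nhds 0) := by
    simpa [mul_one_div, div_eq_mul_inv] using
      tendsto_one_div_add_atTop_nhds_zero_nat.const_mul (2*(g:ℝ))
  rw [← tendsto_sub_nhds_zero_iff]
  exact squeeze_zero_norm (fun k => by simpa [Real.norm_eq_abs] using hbound k) h0
end
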